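/- Assume additionally φ'_j > 0 and q_ij + q_i' > 0. Then there exists α ∈ [−x_i, 1−x_i] such that φ(x_i+α, 1) ≥ φ(x_i, x_j) and ψ(x_i+α, 1) ≤ ψ(x_i, x_j) if and only if both ψ(x_i,x_j) ≥ q_j' and φ'_j·(q_i' + q_ij) ≥ ψ'_j·(a_i' + a_ij) hold. -/

import Mathlib

/-- Case 4 of the pipage rounding (β = 1 - x_j): feasibility of the rounding is
equivalent to system (I4). -/
theorem stmt_8 (a_ij a_i' a_j' q_ij q_i' q_j' x_i x_j : ℝ)
    (haij : a_ij ≤ 0) (hqij : 0 ≤ q_ij) (hqi : 0 ≤ q_i') (hqj : 0 ≤ q_j')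
    (hxi0 : 0 < x_i) (hxi1 : x_i < 1) (hxj0 : 0 < x_j) (hxj1 : x_j < 1)
    (hphij : 0 < a_ij * x_i + a_j') (hq1 : 0 < q_ij + q_i') :
    (∃ α : ℝ, α ∈ Set.Icc (-x_i) (1 - x_i) ∧
      a_ij * (x_i + α) * 1 + a_i' * (x_i + α) + a_j' * 1 ≥
        a_ij * x_i * x_j + a_i' * x_i + a_j' * x_j ∧
      q_ij * (x_i + α) * 1 + q_i' * (x_i + α) + q_j' * 1 ≤
        q_ij * x_i * x_j + q_i' * x_i + q_j' * x_j) ↔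
    (q_ij * x_i * x_j + q_i' * x_i + q_j' * x_j ≥ q_j' ∧
      (a_ij * x_i + a_j') * (q_i' + q_ij) ≥ (q_ij * x_i + q_j') * (a_i' + a_ij)) := by
  have hu : (0:ℝ) < 1 - x_j := by linarith
  have hpsij : 0 ≤ q_ij * x_i + q_j' := by positivity
  constructor
  · rintro ⟨α, ⟨hα1, hα2⟩, hφ, hψ⟩
    -- rearranged forms
    have h3 : (a_ij + a_i') * α + (1 - x_j) * (a_ij * x_i + a_j') ≥ 0 := by nlinarith [hφ]
    have h4 : (q_ij + q_i') * α + (1 - x_j) * (q_ij * x_i + q_j') ≤ 0 := by nlinarith [hψ]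
    constructor
    · nlinarith [mul_le_mul_of_nonneg_left hα1 hq1.le]
    · rcases le_or_gt 0 (a_ij + a_i') with hc | hc
      · have h5 : (a_ij + a_i') * ((q_ij + q_i') * α) ≤
            (a_ij + a_i') * (-(1 - x_j) * (q_ij * x_i + q_j')) := by
          apply mul_le_mul_of_nonneg_left _ hc
          linarith
        have h6 : (q_ij + q_i') * ((a_ij + a_i') * α) ≥
            (q_ij + q_i') * (-(1 - x_j) * (a_ij * x_i + a_j')) := by
          apply mul_le_mul_of_nonneg_left _ hq1.le
          linarith
        have key : (1 - x_j) * ((a_ij * x_i + a_j') * (q_i' + q_ij)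
            - (q_ij * x_i + q_j') * (a_i' + a_ij)) ≥ 0 := by nlinarith [h5, h6]
        nlinarith [key, hu]
      · nlinarith [mul_nonpos_of_nonneg_of_nonpos hpsij hc.le,
          mul_pos hphij hq1]
  · rintro ⟨h1, h2⟩
    refine ⟨-((1 - x_j) * (q_ij * x_i + q_j')) / (q_ij + q_i'), ⟨?_, ?_⟩, ?_, ?_⟩
    · rw [le_div_iff₀ hq1]
      nlinarith [h1]
    · have : -((1 - x_j) * (q_ij * x_i + q_j')) / (q_ij + q_i') ≤ 0 := by
        apply div_nonpos_of_nonpos_of_nonneg _ hq1.le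
        nlinarith
      linarith
    · have hd := hq1.ne'
      rw [ge_iff_le, ← sub_nonneg]
      field_simp
      nlinarith [mul_nonneg hu.le (sub_nonneg.mpr h2)]
    · have hd := hq1.ne'
      apply le_of_eq
      field_simp
      ring
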